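/- Define F(β,τ) = (3/2)·[ sinh(2τ)(1+cosh(2τ))/(cosh(2τ)-1)² - √( sinh²(2τ)(1+cosh(2τ))²/(cosh(2τ)-1)⁴ - 2β(cosh(4τ)-cosh(2τ))/(cosh(2τ)-1)² ) ] · (1 - cosh(2τ) + τ sinh(2τ))/sinh(2τ) for τ > 0 and β ∈ (0, 1/4). Then for each fixed β ∈ (0, 1/4): F(β,τ) → 0 as τ → 0⁺, F(β,τ) → ∞ as τ → ∞, and F(β,·) is continuous on (0,∞); consequently there exist τ⁻, τ⁺, τ* > 0 with F(β,τ⁻) < 1, F(β,τ⁺) > 1, and F(β,τ*) = 1. -/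

import Mathlib

open Filter

/-- The ratio `λ₁⁻/λ₀⁺` of the first `ℓ = 1` eigenvalue to the positive `ℓ = 0`
eigenvalue of the annulus Paneitz boundary problem, `β = α(1-α)`. -/
noncomputable def eigenRatioF (β τ : ℝ) : ℝ :=
  (3 / 2) *
    (Real.sinh (2 * τ) * (1 + Real.cosh (2 * τ)) / (Real.cosh (2 * τ) - 1) ^ 2
      - Real.sqrt (Real.sinh (2 * τ) ^ 2 * (1 + Real.cosh (2 * τ)) ^ 2
            / (Real.cosh (2 * τ) - 1) ^ 4
          - 2 * β * (Real.cosh (4 * τ) - Real.cosh (2 * τ)) / (Real.cosh (2 * τ) - 1) ^ 2)) *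
    ((1 - Real.cosh (2 * τ) + τ * Real.sinh (2 * τ)) / Real.sinh (2 * τ))

/-- Half-angle form of `eigenRatioF`. -/
noncomputable def eigenAux (β τ : ℝ) : ℝ :=
  (3 / 2) * (Real.cosh τ ^ 3 / Real.sinh τ ^ 3
      - Real.sqrt ((Real.cosh τ ^ 3 / Real.sinh τ ^ 3) ^ 2
          - (4 * β + 3 * β / Real.sinh τ ^ 2)))
    * (τ - Real.sinh τ / Real.cosh τ)

lemma eigenAux_eq (β : ℝ) {τ : ℝ} (hτ : 0 < τ) : eigenRatioF β τ = eigenAux β τ := by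
  have hs : 0 < Real.sinh τ := Real.sinh_pos_iff.mpr hτ
  have hc : 0 < Real.cosh τ := Real.cosh_pos τ
  have hc2 : Real.cosh τ ^ 2 = 1 + Real.sinh τ ^ 2 := Real.cosh_sq' τ
  have hC4 : Real.cosh (4 * τ)
      = (Real.cosh τ ^ 2 + Real.sinh τ ^ 2) ^ 2 + (2 * Real.sinh τ * Real.cosh τ) ^ 2 := by
    rw [show (4 : ℝ) * τ = 2 * (2 * τ) by ring, Real.cosh_two_mul (2 * τ),
      Real.cosh_two_mul, Real.sinh_two_mul]
  rw [eigenRatioF, Real.sinh_two_mul, Real.cosh_two_mul, hC4]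
  have hden : Real.cosh τ ^ 2 + Real.sinh τ ^ 2 - 1 = 2 * Real.sinh τ ^ 2 := by rw [hc2]; ring
  rw [hden]
  have h1 : 2 * Real.sinh τ * Real.cosh τ * (1 + (Real.cosh τ ^ 2 + Real.sinh τ ^ 2))
        / (2 * Real.sinh τ ^ 2) ^ 2 = Real.cosh τ ^ 3 / Real.sinh τ ^ 3 := by
    field_simp
    linear_combination (-1) * hc2
  have h2 : (2 * Real.sinh τ * Real.cosh τ) ^ 2 * (1 + (Real.cosh τ ^ 2 + Real.sinh τ ^ 2)) ^ 2
        / (2 * Real.sinh τ ^ 2) ^ 4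
      - 2 * β * ((Real.cosh τ ^ 2 + Real.sinh τ ^ 2) ^ 2 + (2 * Real.sinh τ * Real.cosh τ) ^ 2
          - (Real.cosh τ ^ 2 + Real.sinh τ ^ 2)) / (2 * Real.sinh τ ^ 2) ^ 2
      = (Real.cosh τ ^ 3 / Real.sinh τ ^ 3) ^ 2 - (4 * β + 3 * β / Real.sinh τ ^ 2) := by
    field_simp
    ring_nf
    linear_combination (-3*Real.cosh τ^4 - (1 + Real.sinh τ^2 + 2*β*Real.sinh τ^2)*Real.cosh τ^2
      - 14*β*Real.sinh τ^4) * hc2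
  have h3 : (1 - (Real.cosh τ ^ 2 + Real.sinh τ ^ 2) + τ * (2 * Real.sinh τ * Real.cosh τ))
        / (2 * Real.sinh τ * Real.cosh τ) = τ - Real.sinh τ / Real.cosh τ := by
    field_simp
    linear_combination (-1) * hc2
  rw [h1, h2, h3, eigenAux]

/-- The square-root argument is nonnegative. -/
lemma eigen_arg_le {β s c : ℝ} (hs : 0 < s) (hc2 : c ^ 2 = 1 + s ^ 2)
    (hβ0 : 0 < β) (hβ1 : β < 1 / 4) :
    4 * β + 3 * β / s ^ 2 ≤ (c ^ 3 / s ^ 3) ^ 2 := by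
  have hs2 : 0 < s ^ 2 := by positivity
  rw [div_pow, show (c ^ 3) ^ 2 = (c ^ 2) ^ 3 by ring, hc2,
    show (s ^ 3) ^ 2 = (s ^ 2) ^ 3 by ring, le_div_iff₀ (by positivity)]
  have hx : (4 * β + 3 * β / s ^ 2) * (s ^ 2) ^ 3
      = 4 * β * (s ^ 2) ^ 3 + 3 * β * (s ^ 2) ^ 2 := by
    field_simp
  rw [hx]
  nlinarith [pow_pos hs2 3, pow_pos hs2 2, hs2, mul_pos hs2 hs2]

lemma sub_sqrt_bounds {a X : ℝ} (ha : 0 < a) (hX0 : 0 ≤ X) (hXa : X ≤ a ^ 2) :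
    0 ≤ a - Real.sqrt (a ^ 2 - X) ∧ a - Real.sqrt (a ^ 2 - X) ≤ X / a := by
  have h1 : Real.sqrt (a ^ 2 - X) ≤ a :=
    (Real.sqrt_le_sqrt (by linarith)).trans_eq (Real.sqrt_sq ha.le)
  have hs := Real.sq_sqrt (by linarith : (0:ℝ) ≤ a ^ 2 - X)
  have hnn := Real.sqrt_nonneg (a ^ 2 - X)
  refine ⟨by linarith, (le_div_iff₀ ha).mpr ?_⟩
  nlinarith [mul_nonneg hnn (sub_nonneg.mpr h1)]

lemma eigenAux_continuousOn (β : ℝ) : ContinuousOn (eigenAux β) (Set.Ioi 0) := by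
  have hsne : ∀ τ ∈ Set.Ioi (0:ℝ), Real.sinh τ ≠ 0 :=
    fun τ hτ => (Real.sinh_pos_iff.mpr hτ).ne'
  have hcne : ∀ τ ∈ Set.Ioi (0:ℝ), Real.cosh τ ≠ 0 := fun τ _ => (Real.cosh_pos τ).ne'
  have hco : ContinuousOn (fun τ : ℝ => Real.cosh τ ^ 3 / Real.sinh τ ^ 3) (Set.Ioi 0) :=
    ContinuousOn.div (Real.continuous_cosh.pow 3).continuousOn
      (Real.continuous_sinh.pow 3).continuousOn
      (fun τ hτ => pow_ne_zero _ (hsne τ hτ))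
  refine ContinuousOn.mul (ContinuousOn.mul continuousOn_const (hco.sub ?_)) ?_
  · exact Real.continuous_sqrt.comp_continuousOn
      ((hco.pow 2).sub (continuousOn_const.add
        (ContinuousOn.div continuousOn_const (Real.continuous_sinh.pow 2).continuousOn
          (fun τ hτ => pow_ne_zero _ (hsne τ hτ)))))
  · exact (continuousOn_id).sub
      (ContinuousOn.div Real.continuous_sinh.continuousOn
        Real.continuous_cosh.continuousOn hcne)

lemma eigenAux_tendsto_zero {β : ℝ} (hβ0 : 0 < β) (hβ1 : β < 1 / 4) :
    Tendsto (eigenAux β) (nhdsWithin 0 (Set.Ioi 0)) (nhds 0) := by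
  set g : ℝ → ℝ := fun τ =>
    3 / 2 * (4 * β * (Real.sinh τ ^ 3 / Real.cosh τ ^ 3)
      + 3 * β * (Real.sinh τ / Real.cosh τ ^ 3)) * (τ + 1) with hg
  apply squeeze_zero_norm' (a := g)
  · filter_upwards [self_mem_nhdsWithin] with τ hτ
    have hτ' : (0:ℝ) < τ := hτ
    have hs : 0 < Real.sinh τ := Real.sinh_pos_iff.mpr hτ'
    have hc : 0 < Real.cosh τ := Real.cosh_pos τ
    have hc2 : Real.cosh τ ^ 2 = 1 + Real.sinh τ ^ 2 := Real.cosh_sq' τ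
    have ha : 0 < Real.cosh τ ^ 3 / Real.sinh τ ^ 3 := by positivity
    have hX0 : (0:ℝ) ≤ 4 * β + 3 * β / Real.sinh τ ^ 2 := by positivity
    obtain ⟨hD0, hD1⟩ := sub_sqrt_bounds ha hX0 (eigen_arg_le hs hc2 hβ0 hβ1)
    have hXa : (4 * β + 3 * β / Real.sinh τ ^ 2) / (Real.cosh τ ^ 3 / Real.sinh τ ^ 3)
        = 4 * β * (Real.sinh τ ^ 3 / Real.cosh τ ^ 3)
          + 3 * β * (Real.sinh τ / Real.cosh τ ^ 3) := by
      field_simp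
    have htb : |τ - Real.sinh τ / Real.cosh τ| ≤ τ + 1 := by
      have h1 : Real.sinh τ / Real.cosh τ ≤ 1 :=
        (div_le_one hc).mpr (Real.sinh_lt_cosh τ).le
      have h2 : 0 ≤ Real.sinh τ / Real.cosh τ := by positivity
      rw [abs_le]; constructor <;> nlinarith
    have hDY := hXa ▸ hD1
    have hn : ‖eigenAux β τ‖ = 3 / 2 * (Real.cosh τ ^ 3 / Real.sinh τ ^ 3
        - Real.sqrt ((Real.cosh τ ^ 3 / Real.sinh τ ^ 3) ^ 2
          - (4 * β + 3 * β / Real.sinh τ ^ 2))) * |τ - Real.sinh τ / Real.cosh τ| := by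
      rw [Real.norm_eq_abs, eigenAux, abs_mul, abs_mul, abs_of_nonneg hD0]
      norm_num
    rw [hn]
    show _ ≤ 3 / 2 * (4 * β * (Real.sinh τ ^ 3 / Real.cosh τ ^ 3)
      + 3 * β * (Real.sinh τ / Real.cosh τ ^ 3)) * (τ + 1)
    apply mul_le_mul _ htb (abs_nonneg _) (by positivity)
    exact mul_le_mul_of_nonneg_left hDY (by norm_num)
  · have hgc : Continuous g := by
      apply Continuous.mul
      apply Continuous.mul continuous_const
      · apply Continuous.add
        · exact continuous_const.mul ((Real.continuous_sinh.pow 3).div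
            (Real.continuous_cosh.pow 3) (fun τ => pow_ne_zero _ (Real.cosh_pos τ).ne'))
        · exact continuous_const.mul (Real.continuous_sinh.div
            (Real.continuous_cosh.pow 3) (fun τ => pow_ne_zero _ (Real.cosh_pos τ).ne'))
      · exact continuous_id.add continuous_const
    have hg0 : g 0 = 0 := by simp [hg]
    have h := hgc.continuousAt (x := (0:ℝ))
    rw [ContinuousAt, hg0] at h
    exact h.mono_left nhdsWithin_le_nhds

lemma eigenAux_tendsto_atTop {β : ℝ} (hβ0 : 0 < β) (hβ1 : β < 1 / 4) :
    Tendsto (eigenAux β) atTop atTop := by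
  -- coth → 1
  have hexp : Tendsto (fun τ : ℝ => Real.exp (-(2 * τ))) atTop (nhds 0) := by
    have h2 : Tendsto (fun τ : ℝ => Real.exp (2 * τ)) atTop atTop :=
      Real.tendsto_exp_atTop.comp (tendsto_id.const_mul_atTop two_pos)
    have := h2.inv_tendsto_atTop
    refine this.congr fun τ => ?_
    rw [Pi.inv_apply, ← Real.exp_neg]
  have hcoth : Tendsto (fun τ : ℝ => Real.cosh τ / Real.sinh τ) atTop (nhds 1) := by
    have hlim : Tendsto (fun τ : ℝ => (1 + Real.exp (-(2 * τ))) / (1 - Real.exp (-(2 * τ))))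
        atTop (nhds 1) := by
      have h1 : Tendsto (fun τ : ℝ => 1 + Real.exp (-(2 * τ))) atTop (nhds 1) := by
        simpa using (tendsto_const_nhds (x := (1:ℝ))).add hexp
      have h2 : Tendsto (fun τ : ℝ => 1 - Real.exp (-(2 * τ))) atTop (nhds 1) := by
        simpa using (tendsto_const_nhds (x := (1:ℝ))).sub hexp
      simpa [Pi.div_def] using h1.div h2 one_ne_zero
    refine hlim.congr' ?_
    filter_upwards [eventually_gt_atTop (0:ℝ)] with τ hτ
    have he : Real.exp (-(2 * τ)) < 1 := Real.exp_lt_one_iff.mpr (by linarith)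
    have hene : Real.exp τ ≠ 0 := (Real.exp_pos τ).ne'
    rw [Real.cosh_eq, Real.sinh_eq,
      show -(2 * τ) = -τ + -τ by ring, Real.exp_add, Real.exp_neg]
    have h1 : (1:ℝ) - (Real.exp τ)⁻¹ * (Real.exp τ)⁻¹ ≠ 0 := by
      rw [← Real.exp_neg, ← Real.exp_add]
      have : Real.exp (-τ + -τ) < 1 := Real.exp_lt_one_iff.mpr (by linarith)
      linarith
    field_simp
  have hsinh : Tendsto Real.sinh atTop atTop := by
    apply tendsto_atTop_mono' _ _ tendsto_id
    filter_upwards [eventually_gt_atTop (0:ℝ)] with τ hτ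
    exact (Real.self_lt_sinh_iff.mpr hτ).le
  have hsinh2 : Tendsto (fun τ : ℝ => Real.sinh τ ^ 2) atTop atTop :=
    (tendsto_pow_atTop two_ne_zero).comp hsinh
  have hX : Tendsto (fun τ : ℝ => 4 * β + 3 * β / Real.sinh τ ^ 2) atTop (nhds (4 * β)) := by
    simpa using (tendsto_const_nhds (x := 4*β)).add (Tendsto.div_atTop
      (tendsto_const_nhds (x := 3*β)) hsinh2)
  have ha : Tendsto (fun τ : ℝ => Real.cosh τ ^ 3 / Real.sinh τ ^ 3) atTop (nhds 1) := by
    have := (hcoth.pow 3)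
    simpa [div_pow] using this
  have harg : Tendsto (fun τ : ℝ => (Real.cosh τ ^ 3 / Real.sinh τ ^ 3) ^ 2
      - (4 * β + 3 * β / Real.sinh τ ^ 2)) atTop (nhds (1 - 4 * β)) := by
    simpa using (ha.pow 2).sub hX
  have hsqrt : Tendsto (fun τ : ℝ => Real.sqrt ((Real.cosh τ ^ 3 / Real.sinh τ ^ 3) ^ 2
      - (4 * β + 3 * β / Real.sinh τ ^ 2))) atTop (nhds (Real.sqrt (1 - 4 * β))) :=
    (Real.continuous_sqrt.continuousAt.tendsto).comp harg
  have hD : Tendsto (fun τ : ℝ => 3 / 2 * (Real.cosh τ ^ 3 / Real.sinh τ ^ 3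
      - Real.sqrt ((Real.cosh τ ^ 3 / Real.sinh τ ^ 3) ^ 2
        - (4 * β + 3 * β / Real.sinh τ ^ 2)))) atTop
      (nhds (3 / 2 * (1 - Real.sqrt (1 - 4 * β)))) :=
    tendsto_const_nhds.mul (ha.sub hsqrt)
  have hL : 0 < 3 / 2 * (1 - Real.sqrt (1 - 4 * β)) := by
    have h1 : Real.sqrt (1 - 4 * β) < 1 := by
      have := Real.sqrt_lt_sqrt (by linarith : (0:ℝ) ≤ 1 - 4 * β) (by linarith : 1 - 4*β < 1)
      simpa using this
    nlinarith
  have hG : Tendsto (fun τ : ℝ => τ - Real.sinh τ / Real.cosh τ) atTop atTop := by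
    apply tendsto_atTop_mono' _ _ (tendsto_atTop_add_const_right _ (-1) tendsto_id)
    filter_upwards with τ
    have h1 : Real.sinh τ / Real.cosh τ ≤ 1 :=
      (div_le_one (Real.cosh_pos τ)).mpr (Real.sinh_lt_cosh τ).le
    simp only [id]
    linarith
  have := hG.atTop_mul_pos hL hD
  refine this.congr fun τ => ?_
  rw [eigenAux]; ring

theorem eigenRatio_crossing (β : ℝ) (hβ : β ∈ Set.Ioo (0 : ℝ) (1 / 4)) :
    Tendsto (eigenRatioF β) (nhdsWithin 0 (Set.Ioi 0)) (nhds 0) ∧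
      Tendsto (eigenRatioF β) atTop atTop ∧
      ContinuousOn (eigenRatioF β) (Set.Ioi 0) ∧
      ∃ τminus τplus τstar : ℝ, 0 < τminus ∧ 0 < τplus ∧ 0 < τstar ∧
        eigenRatioF β τminus < 1 ∧ 1 < eigenRatioF β τplus ∧ eigenRatioF β τstar = 1 := by
  obtain ⟨hβ0, hβ1⟩ := hβ
  have hEq : Set.EqOn (eigenRatioF β) (eigenAux β) (Set.Ioi 0) :=
    fun τ hτ => eigenAux_eq β hτ
  have hev0 : eigenAux β =ᶠ[nhdsWithin 0 (Set.Ioi 0)] eigenRatioF β := by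
    filter_upwards [self_mem_nhdsWithin] with τ hτ
    exact (hEq hτ).symm
  have hevT : eigenAux β =ᶠ[atTop] eigenRatioF β := by
    filter_upwards [eventually_gt_atTop (0:ℝ)] with τ hτ
    exact (hEq hτ).symm
  have h0 : Tendsto (eigenRatioF β) (nhdsWithin 0 (Set.Ioi 0)) (nhds 0) :=
    (eigenAux_tendsto_zero hβ0 hβ1).congr' hev0
  have hT : Tendsto (eigenRatioF β) atTop atTop :=
    (eigenAux_tendsto_atTop hβ0 hβ1).congr' hevT
  have hC : ContinuousOn (eigenRatioF β) (Set.Ioi 0) :=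
    (eigenAux_continuousOn β).congr hEq
  refine ⟨h0, hT, hC, ?_⟩
  have hlt : ∀ᶠ τ in nhdsWithin 0 (Set.Ioi 0), eigenRatioF β τ < 1 :=
    h0.eventually_lt_const one_pos
  obtain ⟨τm, hm1, hm0⟩ := (hlt.and self_mem_nhdsWithin).exists
  obtain ⟨τp, hp1, hp2⟩ := ((hT.eventually_gt_atTop 1).and (eventually_gt_atTop 0)).exists
  have hm0' : (0:ℝ) < τm := hm0
  have hsub : Set.uIcc τm τp ⊆ Set.Ioi 0 := by
    intro x hx
    have := hx.1
    have hmin : (0:ℝ) < min τm τp := lt_min hm0' hp2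
    exact lt_of_lt_of_le hmin this
  have h1mem : (1:ℝ) ∈ Set.uIcc (eigenRatioF β τm) (eigenRatioF β τp) := by
    rw [Set.mem_uIcc]
    exact Or.inl ⟨hm1.le, hp1.le⟩
  obtain ⟨τs, hτs, hfs⟩ := intermediate_value_uIcc (hC.mono hsub) h1mem
  exact ⟨τm, τp, τs, hm0', hp2, hsub hτs, hm1, hp1, hfs⟩
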